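/- arXiv:2006.04526 — 2 statements merged into one kernel-verified Lean document; each statement's English description precedes it below -/
import Mathlib

section
/- On the Meson triple system T₂ (bracket μ(g_i,g_j,g_l) = δ_{li}g_j - δ_{lj}g_i), the formal map μ_t = μ + μ₂t², with μ₂(g_i,g_j,g_p) = δ_{jp}g_j - δ_{ip}g_i, is a formal deformation of order 2: the coefficients of t⁰, t¹, t², t³, t⁴ in the Lie triple system identities for μ_t all vanish. -/
def IsLieTripleSystem (k : Type*) {T : Type*} [Field k] [AddCommGroup T] [Module k T]
    (br : T → T → T → T) : Prop :=
  (∀ a a' b c, br (a + a') b c = br a b c + br a' b c) ∧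
  (∀ (s : k) (a b c : T), br (s • a) b c = s • br a b c) ∧
  (∀ a b b' c, br a (b + b') c = br a b c + br a b' c) ∧
  (∀ (s : k) (a b c : T), br a (s • b) c = s • br a b c) ∧
  (∀ a b c c', br a b (c + c') = br a b c + br a b c') ∧
  (∀ (s : k) (a b c : T), br a b (s • c) = s • br a b c) ∧
  (∀ a b, br a a b = 0) ∧
  (∀ a b c, br a b c + br b c a + br c a b = 0) ∧
  (∀ a b c d e, br a b (br c d e) = br (br a b c) d e + br c (br a b d) e + br c d (br a b e))

set_option maxHeartbeats 2000000 in
/-- On the Meson triple system T₂ (bracket μ determined by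
μ(g_i,g_j,g_l) = δ_{li}g_j - δ_{lj}g_i), the formal map μ_t = μ + μ₂t², with
μ₂ determined by μ₂(g_i,g_j,g_p) = δ_{jp}g_j - δ_{ip}g_i, is a formal
deformation of order 2: the coefficients of t⁰, t¹, t², t³, t⁴ in the Lie
triple system identities for μ_t all vanish (the t¹ and t³ coefficients are
identically zero since μ₁ = μ₃ = 0). -/
theorem meson_T2_deformation_order_two (k : Type*) [Field k] :
    let μ : (Fin 2 → k) → (Fin 2 → k) → (Fin 2 → k) → (Fin 2 → k) :=
      fun x y z => (∑ i, x i * z i) • y - (∑ i, y i * z i) • x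
    let μ₂ : (Fin 2 → k) → (Fin 2 → k) → (Fin 2 → k) → (Fin 2 → k) :=
      fun x y z => (∑ i, x i) • (fun p => y p * z p) - (∑ i, y i) • (fun p => x p * z p)
    IsLieTripleSystem k μ ∧
    (∀ a b, μ₂ a a b = 0) ∧
    (∀ a b c, μ₂ a b c + μ₂ b c a + μ₂ c a b = 0) ∧
    (∀ a b c d e,
        μ₂ a b (μ c d e) + μ a b (μ₂ c d e) =
          μ (μ₂ a b c) d e + μ₂ (μ a b c) d e + μ c (μ₂ a b d) e +
            μ₂ c (μ a b d) e + μ c d (μ₂ a b e) + μ₂ c d (μ a b e)) ∧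
    (∀ a b c d e,
        μ₂ a b (μ₂ c d e) =
          μ₂ (μ₂ a b c) d e + μ₂ c (μ₂ a b d) e + μ₂ c d (μ₂ a b e)) := by
  intro μ μ₂

  refine ⟨⟨?_,?_,?_,?_,?_,?_,?_,?_,?_⟩,?_,?_,?_,?_⟩ <;> intros <;> funext p <;> fin_cases p <;>
    simp only [μ, μ₂, Fin.sum_univ_two, Pi.sub_apply, Pi.smul_apply, smul_eq_mul,
      Pi.add_apply, Pi.zero_apply, Fin.mk_zero, Fin.mk_one, Fin.isValue] <;> ring
end

section
/- If two equivariant formal deformations μ_t and μ̃_t of a G-Lie triple system T are equivalent via a formal isomorphism Ψ_t = id + Σ_{i≥1} ψ_i t^i, then their infinitesimals differ by a Yamaguti coboundary: μ₁ - μ̃₁ = δ¹ψ₁, where δ¹ψ₁(a,b,c) = [ψ₁a,b,c] + [a,ψ₁b,c] + [a,b,ψ₁c] - ψ₁[a,b,c]. Hence the cohomology class of the infinitesimal depends only on the equivalence class of the deformation. -/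
/-- A trilinear (3-multilinear over k) map. -/
def IsTrilinear (k : Type*) {T : Type*} [Field k] [AddCommGroup T] [Module k T]
    (f : T → T → T → T) : Prop :=
  (∀ a a' b c, f (a + a') b c = f a b c + f a' b c) ∧
  (∀ (s : k) (a b c : T), f (s • a) b c = s • f a b c) ∧
  (∀ a b b' c, f a (b + b') c = f a b c + f a b' c) ∧
  (∀ (s : k) (a b c : T), f a (s • b) c = s • f a b c) ∧
  (∀ a b c c', f a b (c + c') = f a b c + f a b c') ∧
  (∀ (s : k) (a b c : T), f a b (s • c) = s • f a b c)

/-- If two equivariant formal deformations μ_t and μ̃_t (= ν)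
of a G-Lie triple system T are equivalent via an equivariant formal
isomorphism Ψ_t = id + Σ_{i≥1} ψ_i tⁱ, then their infinitesimals differ by a
Yamaguti coboundary: μ₁ - μ̃₁ = δ¹ψ₁; hence the cohomology class of the
infinitesimal depends only on the equivalence class of the deformation. -/
theorem equivalent_deformations_infinitesimals_cohomologous
    {k T G : Type*} [Field k] [AddCommGroup T] [Module k T]
    [Group G] [Finite G] [DistribMulAction G T] [SMulCommClass G k T]
    (br : T → T → T → T) (hbr : IsLieTripleSystem k br)
    (hbrG : ∀ (g : G) (a b c : T), br (g • a) (g • b) (g • c) = g • br a b c)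
    (μ ν : ℕ → T → T → T → T) (hμ0 : μ 0 = br) (hν0 : ν 0 = br)
    (hμtri : ∀ i, IsTrilinear k (μ i)) (hνtri : ∀ i, IsTrilinear k (ν i))
    (hμalt : ∀ i a b, μ i a a b = 0) (hνalt : ∀ i a b, ν i a a b = 0)
    (hμcyc : ∀ i a b c, μ i a b c + μ i b c a + μ i c a b = 0)
    (hνcyc : ∀ i a b c, ν i a b c + ν i b c a + ν i c a b = 0)
    (hμdef : ∀ (r : ℕ) (a b c d e : T),
        ∑ p ∈ Finset.HasAntidiagonal.antidiagonal r, μ p.1 a b (μ p.2 c d e) =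
          ∑ p ∈ Finset.HasAntidiagonal.antidiagonal r,
            (μ p.1 (μ p.2 a b c) d e + μ p.1 c (μ p.2 a b d) e +
              μ p.1 c d (μ p.2 a b e)))
    (hνdef : ∀ (r : ℕ) (a b c d e : T),
        ∑ p ∈ Finset.HasAntidiagonal.antidiagonal r, ν p.1 a b (ν p.2 c d e) =
          ∑ p ∈ Finset.HasAntidiagonal.antidiagonal r,
            (ν p.1 (ν p.2 a b c) d e + ν p.1 c (ν p.2 a b d) e +
              ν p.1 c d (ν p.2 a b e)))
    (hμG : ∀ i (g : G) (a b c : T), μ i (g • a) (g • b) (g • c) = g • μ i a b c)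
    (hνG : ∀ i (g : G) (a b c : T), ν i (g • a) (g • b) (g • c) = g • ν i a b c)
    (ψ : ℕ → T → T) (hψ0 : ∀ a, ψ 0 a = a)
    (hψadd : ∀ i a b, ψ i (a + b) = ψ i a + ψ i b)
    (hψsmul : ∀ i (s : k) a, ψ i (s • a) = s • ψ i a)
    (hψG : ∀ i (g : G) (a : T), ψ i (g • a) = g • ψ i a)
    -- coefficientwise form of μ̃_t(Ψ_t a, Ψ_t b, Ψ_t c) = Ψ_t (μ_t(a,b,c))
    (hiso : ∀ (r : ℕ) (a b c : T),
        ∑ q ∈ Finset.Nat.antidiagonalTuple 4 r,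
            ν (q 0) (ψ (q 1) a) (ψ (q 2) b) (ψ (q 3) c) =
          ∑ p ∈ Finset.HasAntidiagonal.antidiagonal r, ψ p.1 (μ p.2 a b c)) :
    ∀ a b c : T,
      μ 1 a b c - ν 1 a b c =
        br (ψ 1 a) b c + br a (ψ 1 b) c + br a b (ψ 1 c) - ψ 1 (br a b c) := by
  intro a b c
  have h := hiso 1 a b c
  have e1 : (Finset.Nat.antidiagonalTuple 4 1)
      = {![1,0,0,0],![0,1,0,0],![0,0,1,0],![0,0,0,1]} := by decide
  have e2 : (Finset.HasAntidiagonal.antidiagonal 1 : Finset (ℕ×ℕ)) = {(0,1),(1,0)} := by decide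
  rw [e1, e2] at h
  rw [Finset.sum_insert (by decide), Finset.sum_insert (by decide),
    Finset.sum_insert (by decide), Finset.sum_singleton,
    Finset.sum_insert (by decide), Finset.sum_singleton] at h
  simp only [show (![1,0,0,0] : Fin 4 → ℕ) 0 = 1 from rfl,
    show (![1,0,0,0] : Fin 4 → ℕ) 1 = 0 from rfl,
    show (![1,0,0,0] : Fin 4 → ℕ) 2 = 0 from rfl,
    show (![1,0,0,0] : Fin 4 → ℕ) 3 = 0 from rfl,
    show (![0,1,0,0] : Fin 4 → ℕ) 0 = 0 from rfl,
    show (![0,1,0,0] : Fin 4 → ℕ) 1 = 1 from rfl,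
    show (![0,1,0,0] : Fin 4 → ℕ) 2 = 0 from rfl,
    show (![0,1,0,0] : Fin 4 → ℕ) 3 = 0 from rfl,
    show (![0,0,1,0] : Fin 4 → ℕ) 0 = 0 from rfl,
    show (![0,0,1,0] : Fin 4 → ℕ) 1 = 0 from rfl,
    show (![0,0,1,0] : Fin 4 → ℕ) 2 = 1 from rfl,
    show (![0,0,1,0] : Fin 4 → ℕ) 3 = 0 from rfl,
    show (![0,0,0,1] : Fin 4 → ℕ) 0 = 0 from rfl,
    show (![0,0,0,1] : Fin 4 → ℕ) 1 = 0 from rfl,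
    show (![0,0,0,1] : Fin 4 → ℕ) 2 = 0 from rfl,
    show (![0,0,0,1] : Fin 4 → ℕ) 3 = 1 from rfl,
    hψ0, hμ0, hν0] at h
  linear_combination (norm := abel_nf) -h
end
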